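/- Let n, m ≥ 1, let V ⊆ ℝⁿ be open, let h : V → ℝᵐ be harmonic with |h| ≤ M, |Dh| ≤ M and |D²h| ≤ M on V, and let η > 0. There exists ε₁ > 0, depending only on n, m, M and η, such that for every 0 < ε ≤ ε₁ the function H(x,z) := |ε^{-1} z − h(x)|² + η|x|² is a comparison function for the minimal surface system in the open set V × B_εᵐ. -/

import Mathlib

open Set Metric MeasureTheory

noncomputable section

/-- Euclidean space `ℝ^n`. -/
abbrev Euc (n : ℕ) : Type := EuclideanSpace ℝ (Fin n)

/-- The point `X = (x, z)` of `ℝ^{n+m}`. -/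
def pairPt (n m : ℕ) (x : Euc n) (z : Euc m) : Euc (n + m) :=
  WithLp.toLp 2 (fun i => Fin.addCases (motive := fun _ => ℝ) (fun j => x j) (fun j => z j) i)

/-- The `x`-part of a point `X ∈ ℝ^{n+m}`. -/
def xPart (n m : ℕ) (X : Euc (n + m)) : Euc n := WithLp.toLp 2 (fun i => X (Fin.castAdd m i))

/-- The `z`-part of a point `X ∈ ℝ^{n+m}`. -/
def zPart (n m : ℕ) (X : Euc (n + m)) : Euc m := WithLp.toLp 2 (fun i => X (Fin.natAdd n i))

/-- `H` is a comparison function for the minimal surface system in `U ⊆ ℝ^{n+m}`: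
`H` is `C²` on `U` and for every `X ∈ U` and every `n`-dimensional subspace `L`
orthogonal to `∇H(X)` (i.e. contained in the kernel of `DH(X)`), the Laplacian of `H`
along `L`, computed with any orthonormal basis of `L`, is positive. -/
def IsComparison (n m : ℕ) (U : Set (Euc (n + m))) (H : Euc (n + m) → ℝ) : Prop :=
  ContDiffOn ℝ 2 H U ∧
    ∀ X ∈ U, ∀ L : Submodule ℝ (Euc (n + m)), Module.finrank ℝ L = n →
      (∀ v ∈ L, fderivWithin ℝ H U X v = 0) →
      ∀ e : Fin n → Euc (n + m), (∀ k, e k ∈ L) → Orthonormal ℝ e →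
        0 < ∑ k, iteratedFDerivWithin ℝ 2 H U X ![e k, e k]

/-- `Γ` is a viscosity minimal set in the open set `W ⊆ ℝ^{n+m}`: for every open `U ⊆ W`,
every comparison function `H` in `U` and every `c`, there is no point of `Γ ∩ U` where
`H = c` while `Γ ∩ U ⊆ {H ≤ c}`. -/
def IsViscosityMinimalSet (n m : ℕ) (W : Set (Euc (n + m))) (Γ : Set (Euc (n + m))) : Prop :=
  ∀ U : Set (Euc (n + m)), U ⊆ W → IsOpen U →
    ∀ H : Euc (n + m) → ℝ, IsComparison n m U H → ∀ c : ℝ,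
      ¬ ∃ X₀ ∈ Γ ∩ U, H X₀ = c ∧ ∀ X ∈ Γ ∩ U, H X ≤ c

/-- The graph `{(x, u x) : x ∈ Ω} ⊆ ℝ^{n+m}` of `u : Ω → ℝ^m`. -/
def graphSet (n m : ℕ) (Ω : Set (Euc n)) (u : Euc n → Euc m) : Set (Euc (n + m)) :=
  (fun x => pairPt n m x (u x)) '' Ω

/-- `u : Ω → ℝ^m` is a viscosity solution of the minimal surface system. -/
def IsViscositySolution (n m : ℕ) (Ω : Set (Euc n)) (u : Euc n → Euc m) : Prop :=
  ContinuousOn u Ω ∧ IsViscosityMinimalSet n m univ (graphSet n m Ω u)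
/-- The area integrand `F(A) = √(det(Iₘ + AᵀA))` for an `n × m` matrix `A`. -/
def msF (n m : ℕ) (A : Matrix (Fin n) (Fin m) ℝ) : ℝ :=
  Real.sqrt (1 + Matrix.transpose A * A).det

/-- The second partial derivative `F_{αi,βj}` of `F` with respect to the entries
`A_{iα}` and `A_{jβ}`. -/
def msF2 (n m : ℕ) (A : Matrix (Fin n) (Fin m) ℝ) (i j : Fin n) (α β : Fin m) : ℝ :=
  deriv (fun s : ℝ => deriv (fun t : ℝ =>
    msF n m (A + t • Matrix.single i α 1 + s • Matrix.single j β 1)) 0) 0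

/-- The Jacobian matrix `Du(x) = (∂ᵢ u^α(x))`, computed within `Ω`. -/
def gradMat (n m : ℕ) (Ω : Set (Euc n)) (u : Euc n → Euc m) (x : Euc n) :
    Matrix (Fin n) (Fin m) ℝ :=
  fun i α => fderivWithin ℝ u Ω x (EuclideanSpace.single i 1) α

/-- The second partial derivative `∂ᵢ∂ⱼ u (x)`, computed within `Ω`. -/
def secondPartial (n m : ℕ) (Ω : Set (Euc n)) (u : Euc n → Euc m) (x : Euc n)
    (i j : Fin n) : Euc m :=
  iteratedFDerivWithin ℝ 2 u Ω x ![EuclideanSpace.single i 1, EuclideanSpace.single j 1]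

/-- `u` is a classical solution of the minimal surface system on `Ω`:
`∑_{i,j,β} F_{αi,βj}(Du(x)) ∂ᵢ∂ⱼ u^β(x) = 0` for all `x ∈ Ω` and all `α`. -/
def IsClassicalSolution (n m : ℕ) (Ω : Set (Euc n)) (u : Euc n → Euc m) : Prop :=
  ∀ x ∈ Ω, ∀ α : Fin m,
    ∑ i, ∑ j, ∑ β, msF2 n m (gradMat n m Ω u x) i j α β *
      secondPartial n m Ω u x i j β = 0

/-- The maximal Pucci operator `M⁺_{λ,Λ}(N) = Λ·∑_{μᵢ>0} μᵢ + λ·∑_{μᵢ<0} μᵢ`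
on symmetric matrices (where the `μᵢ` are the eigenvalues of `N`). -/
def pucciPlus {n : ℕ} (lam Lam : ℝ) (N : Matrix (Fin n) (Fin n) ℝ) : ℝ :=
  if h : N.IsHermitian then
    ∑ i, (if 0 < h.eigenvalues i then Lam * h.eigenvalues i else lam * h.eigenvalues i)
  else 0

/-- The Hessian matrix `D²φ(x)` of a scalar function, computed within `s`. -/
def hessWithin (n : ℕ) (s : Set (Euc n)) (φ : Euc n → ℝ) (x : Euc n) :
    Matrix (Fin n) (Fin n) ℝ :=
  fun i j =>
    iteratedFDerivWithin ℝ 2 φ s x ![EuclideanSpace.single i 1, EuclideanSpace.single j 1]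

/-- `‖φ‖_{C^{1,1}} ≤ 1` on `s`: `|φ| ≤ 1`, `|Dφ| ≤ 1` and `|D²φ| ≤ 1` on `s`. -/
def C11Bound (n : ℕ) (s : Set (Euc n)) (φ : Euc n → ℝ) : Prop :=
  (∀ x ∈ s, |φ x| ≤ 1) ∧ (∀ x ∈ s, ‖fderivWithin ℝ φ s x‖ ≤ 1) ∧
    (∀ x ∈ s, ‖iteratedFDerivWithin ℝ 2 φ s x‖ ≤ 1)

/-- The Laplacian `Δf(x) = ∑ᵢ ∂ᵢᵢ f(x)` of a scalar function, computed within `s`. -/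
def lapWithin (n : ℕ) (s : Set (Euc n)) (f : Euc n → ℝ) (x : Euc n) : ℝ :=
  ∑ i, iteratedFDerivWithin ℝ 2 f s x
    ![EuclideanSpace.single i 1, EuclideanSpace.single i 1]

/-- `h : V → ℝ^m` is harmonic on `V`: it is `C²` and `Δh^α = 0` on `V` for each `α`. -/
def HarmonicOnE (n m : ℕ) (V : Set (Euc n)) (h : Euc n → Euc m) : Prop :=
  ContDiffOn ℝ 2 h V ∧ ∀ x ∈ V, ∀ α : Fin m,
    ∑ i, (iteratedFDerivWithin ℝ 2 h V x
      ![EuclideanSpace.single i 1, EuclideanSpace.single i 1]) α = 0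

/-- The quadratic polynomial map `q : ℝⁿ → ℝᵐ` with constant part `c`, linear part `B`
and quadratic part `Q`, i.e. `q^α(x) = c^α + ∑ᵢ Bᵢα xᵢ + ∑ᵢⱼ Qαᵢⱼ xᵢ xⱼ`. -/
def quadMap (n m : ℕ) (c : Euc m) (B : Matrix (Fin n) (Fin m) ℝ)
    (Q : Fin m → Matrix (Fin n) (Fin n) ℝ) (x : Euc n) : Euc m :=
  WithLp.toLp 2 (fun α => c α + ∑ i, B i α * x i + ∑ i, ∑ j, Q α i j * x i * x j)

/-- The quadratic polynomial with quadratic part `Q` is harmonic, i.e. each quadratic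
part has zero trace. -/
def QuadHarmonic (n m : ℕ) (Q : Fin m → Matrix (Fin n) (Fin n) ℝ) : Prop :=
  ∀ α, ∑ i, Q α i i = 0

/-- All coefficients of the quadratic polynomial with data `(c, B, Q)` are bounded by `K`. -/
def QuadCoeffBound (n m : ℕ) (c : Euc m) (B : Matrix (Fin n) (Fin m) ℝ)
    (Q : Fin m → Matrix (Fin n) (Fin n) ℝ) (K : ℝ) : Prop :=
  (∀ α, |c α| ≤ K) ∧ (∀ i α, |B i α| ≤ K) ∧ (∀ α i j, |Q α i j| ≤ K)

/-- The oscillation of `w` on `s`: the infimum of radii `ρ ≥ 0` such that the image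
`w(s)` is contained in some ball `B_ρ(z)` of `ℝᵐ`. -/
def oscOn (n m : ℕ) (s : Set (Euc n)) (w : Euc n → Euc m) : ℝ :=
  sInf {ρ : ℝ | 0 ≤ ρ ∧ ∃ z : Euc m, ∀ x ∈ s, w x ∈ ball z ρ}

/-! ### Auxiliary lemmas for `comparison_from_harmonic` -/

namespace CompAux

open Matrix

variable {ι : Type*} [Fintype ι] [DecidableEq ι]

lemma aux_posSemidef_one_sub_transpose_mul (A : Matrix ι ι ℝ)
    (h : (1 - A * Aᵀ).PosSemidef) : (1 - Aᵀ * A).PosSemidef := by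
  refine Matrix.PosSemidef.of_dotProduct_mulVec_nonneg ?_ ?_
  · have h1 : (Aᵀ * A).IsHermitian := by
      simpa using Matrix.isHermitian_conjTranspose_mul_self A
    exact Matrix.isHermitian_one.sub h1
  · intro v
    have key : ∀ u : ι → ℝ, dotProduct u ((A * Aᵀ) *ᵥ u) ≤ dotProduct u u := by
      intro u
      have := h.dotProduct_mulVec_nonneg u
      simp only [Matrix.sub_mulVec, dotProduct_sub, Matrix.one_mulVec, star_trivial] at this
      linarith
    set u : ι → ℝ := A *ᵥ v with hu
    have hp : dotProduct v ((Aᵀ * A) *ᵥ v) = dotProduct u u := by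
      rw [← Matrix.mulVec_mulVec, Matrix.dotProduct_mulVec, Matrix.vecMul_transpose]
    set p : ℝ := dotProduct u u with hpdef
    have hp0 : 0 ≤ p := Finset.sum_nonneg (fun i _ => mul_self_nonneg (u i))
    have hAAt : dotProduct (Aᵀ *ᵥ u) (Aᵀ *ᵥ u) ≤ p := by
      have h2 := key u
      rw [← Matrix.mulVec_mulVec, Matrix.dotProduct_mulVec, ← Matrix.mulVec_transpose] at h2
      exact h2.trans_eq rfl
    have hpv : p = dotProduct (Aᵀ *ᵥ u) v := by
      rw [hpdef, hu, Matrix.dotProduct_mulVec u A v, ← Matrix.mulVec_transpose]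
    have cs : p ^ 2 ≤ dotProduct (Aᵀ *ᵥ u) (Aᵀ *ᵥ u) * dotProduct v v := by
      rw [hpv]
      simpa [dotProduct, pow_two, Finset.mul_sum, Finset.sum_mul] using
        Finset.sum_mul_sq_le_sq_mul_sq Finset.univ (Aᵀ *ᵥ u) v
    have hvv : 0 ≤ dotProduct v v := Finset.sum_nonneg (fun i _ => mul_self_nonneg (v i))
    have hple : p ≤ dotProduct v v := by
      rcases eq_or_lt_of_le hp0 with h0 | h0
      · rw [← h0]; exact hvv
      · nlinarith [cs, hAAt, mul_le_mul_of_nonneg_right hAAt hvv]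
    have : 0 ≤ dotProduct v v - p := by linarith
    simpa [Matrix.sub_mulVec, dotProduct_sub, Matrix.one_mulVec, hp] using this

lemma aux_trace_est (A S : Matrix ι ι ℝ) (M : ℝ) (hM : 0 ≤ M)
    (hGram : (1 - A * Aᵀ).PosSemidef)
    (htr : ∑ i, S i i = 0)
    (hS : ∀ i j, |S i j| ≤ M) :
    |∑ k, ∑ i, ∑ j, A k i * S i j * A k j| ≤
      (Fintype.card ι : ℝ) * M * ∑ k, (1 - ∑ i, A k i ^ 2) := by
  classical
  set P : Matrix ι ι ℝ := Aᵀ * A with hP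
  have hQpsd : (1 - P).PosSemidef := aux_posSemidef_one_sub_transpose_mul A hGram
  obtain ⟨R, hRR, hRsym⟩ : ∃ R : Matrix ι ι ℝ, R * R = 1 - P ∧ ∀ i j, R i j = R j i := by
    open scoped MatrixOrder in
    refine ⟨CFC.sqrt (1 - P), CFC.sqrt_mul_sqrt_self (1 - P) hQpsd.nonneg, fun i j => ?_⟩
    have := (Matrix.nonneg_iff_posSemidef.mp (CFC.sqrt_nonneg (1 - P))).isHermitian
    have h2 := congrFun (congrFun this.eq i) j
    simpa [Matrix.conjTranspose_apply] using h2.symm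
  have hLHS : ∑ k, ∑ i, ∑ j, A k i * S i j * A k j = (S * P).trace := by
    rw [Matrix.trace]
    simp only [Matrix.diag_apply, Matrix.mul_apply, Matrix.transpose_apply, hP, Finset.mul_sum]
    rw [Finset.sum_comm]
    refine Finset.sum_congr rfl fun i _ => ?_
    rw [Finset.sum_comm]
    refine Finset.sum_congr rfl fun j _ => ?_
    refine Finset.sum_congr rfl fun k _ => ?_
    ring
  have htrS : (S * (1 : Matrix ι ι ℝ)).trace = 0 := by
    simpa [Matrix.trace, Matrix.diag_apply] using htr
  have hcyc : (S * P).trace = -(R * S * R).trace := by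
    have h1 : (S * P).trace = (S * 1).trace - (S * (1 - P)).trace := by
      rw [← Matrix.trace_sub, ← Matrix.mul_sub, sub_sub_cancel]
    have h2 : (S * (1 - P)).trace = (R * S * R).trace := by
      rw [← hRR, ← Matrix.mul_assoc, Matrix.trace_mul_cycle]
    rw [h1, h2, htrS]; ring
  have hbound : |(R * S * R).trace| ≤ (Fintype.card ι : ℝ) * M * (1 - P).trace := by
    have hdiag : ∀ k, |(R * S * R) k k| ≤ (Fintype.card ι : ℝ) * M * ((R * R) k k) := by
      intro k
      have hexp : (R * S * R) k k = ∑ i, ∑ j, R k i * S i j * R k j := by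
        simp only [Matrix.mul_apply, Finset.sum_mul]
        rw [Finset.sum_comm]
        refine Finset.sum_congr rfl fun i _ => Finset.sum_congr rfl fun j _ => ?_
        rw [hRsym j k]
      rw [hexp]
      have h1 : |∑ i, ∑ j, R k i * S i j * R k j| ≤ ∑ i, ∑ j, |R k i| * M * |R k j| := by
        refine (Finset.abs_sum_le_sum_abs _ _).trans ?_
        refine Finset.sum_le_sum fun i _ => ?_
        refine (Finset.abs_sum_le_sum_abs _ _).trans ?_
        refine Finset.sum_le_sum fun j _ => ?_
        rw [abs_mul, abs_mul]
        exact mul_le_mul_of_nonneg_right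
          (mul_le_mul_of_nonneg_left (hS i j) (abs_nonneg _)) (abs_nonneg _)
      have h2 : ∑ i, ∑ j, |R k i| * M * |R k j| = M * (∑ i, |R k i|) ^ 2 := by
        rw [pow_two, Finset.sum_mul_sum, Finset.mul_sum]
        refine Finset.sum_congr rfl fun i _ => ?_
        rw [Finset.mul_sum]
        exact Finset.sum_congr rfl fun j _ => by ring
      have h3 : (∑ i, |R k i|) ^ 2 ≤ (Fintype.card ι : ℝ) * ∑ i, R k i ^ 2 := by
        have := sq_sum_le_card_mul_sum_sq (s := (Finset.univ : Finset ι))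
          (f := fun i => |R k i|)
        simpa [sq_abs, Finset.card_univ] using this
      have h4 : (R * R) k k = ∑ i, R k i ^ 2 := by
        simp only [Matrix.mul_apply]
        refine Finset.sum_congr rfl fun i _ => ?_
        rw [hRsym i k]; ring
      calc |∑ i, ∑ j, R k i * S i j * R k j| ≤ M * (∑ i, |R k i|) ^ 2 := by
            rw [← h2]; exact h1
        _ ≤ M * ((Fintype.card ι : ℝ) * ∑ i, R k i ^ 2) :=
            mul_le_mul_of_nonneg_left h3 hM
        _ = (Fintype.card ι : ℝ) * M * ((R * R) k k) := by rw [h4]; ring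
    calc |(R * S * R).trace| ≤ ∑ k, |(R * S * R) k k| := by
          simpa [Matrix.trace, Matrix.diag_apply] using
            Finset.abs_sum_le_sum_abs (fun k => (R * S * R) k k) Finset.univ
      _ ≤ ∑ k, (Fintype.card ι : ℝ) * M * ((R * R) k k) := Finset.sum_le_sum fun k _ => hdiag k
      _ = (Fintype.card ι : ℝ) * M * (1 - P).trace := by
          rw [← Finset.mul_sum, hRR]; rfl
  have htrQ : (1 - P).trace = ∑ k, (1 - ∑ i, A k i ^ 2) := by
    simp only [Matrix.trace, Matrix.diag_apply, Matrix.sub_apply, Matrix.one_apply_eq, hP,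
      Matrix.mul_apply, Matrix.transpose_apply]
    rw [Finset.sum_sub_distrib, Finset.sum_sub_distrib]
    congr 1
    rw [Finset.sum_comm]
    exact Finset.sum_congr rfl fun k _ => Finset.sum_congr rfl fun i _ => by ring
  rw [hLHS, hcyc, abs_neg, ← htrQ]
  exact hbound

/-- `xPart` as a continuous linear map. -/
def xpL (n m : ℕ) : Euc (n + m) →L[ℝ] Euc n :=
  LinearMap.toContinuousLinearMap
    { toFun := xPart n m
      map_add' := fun _ _ => rfl
      map_smul' := fun _ _ => rfl }

/-- `zPart` as a continuous linear map. -/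
def zpL (n m : ℕ) : Euc (n + m) →L[ℝ] Euc m :=
  LinearMap.toContinuousLinearMap
    { toFun := zPart n m
      map_add' := fun _ _ => rfl
      map_smul' := fun _ _ => rfl }

@[simp] lemma xpL_apply (n m : ℕ) (X : Euc (n + m)) : xpL n m X = xPart n m X := rfl
@[simp] lemma zpL_apply (n m : ℕ) (X : Euc (n + m)) : zpL n m X = zPart n m X := rfl

lemma inner_split (n m : ℕ) (X Y : Euc (n + m)) :
    (inner ℝ X Y : ℝ) =
      inner ℝ (xPart n m X) (xPart n m Y) + inner ℝ (zPart n m X) (zPart n m Y) := by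
  simp only [PiLp.inner_apply, RCLike.inner_apply, starRingEnd_apply, star_trivial]
  rw [Fin.sum_univ_add]
  rfl

lemma euc_decomp {N : ℕ} (a : Euc N) : a = ∑ i, a i • EuclideanSpace.single i (1 : ℝ) := by
  ext j
  rw [WithLp.ofLp_sum, Finset.sum_apply]
  simp [EuclideanSpace.single_apply]

lemma euc_abs_le_norm {N : ℕ} (y : Euc N) (α : Fin N) : |y α| ≤ ‖y‖ := by
  have h := abs_real_inner_le_norm (EuclideanSpace.single α (1:ℝ)) y
  simpa [EuclideanSpace.inner_single_left] using h

lemma euc_norm_sq_eq_sum {N : ℕ} (a : Euc N) : ‖a‖ ^ 2 = ∑ i, a i ^ 2 := by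
  rw [← real_inner_self_eq_norm_sq]
  simp only [PiLp.inner_apply, RCLike.inner_apply, starRingEnd_apply, star_trivial]
  exact Finset.sum_congr rfl fun i _ => (pow_two (a i)).symm

/-- Expansion of a bilinear (CLM-valued) map in coordinates. -/
lemma clm2_expand {N m' : ℕ} (T : Euc N →L[ℝ] Euc N →L[ℝ] Euc m') (a b : Euc N) (α : Fin m') :
    T a b α = ∑ i, ∑ j, a i * b j *
      (T (EuclideanSpace.single i (1:ℝ)) (EuclideanSpace.single j (1:ℝ)) α) := by
  have h2 : ∀ i : Fin N, T (EuclideanSpace.single i (1:ℝ)) b α =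
      ∑ j, b j * (T (EuclideanSpace.single i (1:ℝ)) (EuclideanSpace.single j (1:ℝ)) α) := by
    intro i
    conv_lhs => rw [euc_decomp b]
    rw [map_sum, WithLp.ofLp_sum, Finset.sum_apply]
    refine Finset.sum_congr rfl fun j _ => ?_
    rw [map_smulₛₗ]
    simp only [RingHom.id_apply]
    rw [PiLp.smul_apply, smul_eq_mul]
  have h1 : T a b α = ∑ i, a i * (T (EuclideanSpace.single i (1:ℝ)) b α) := by
    conv_lhs => rw [euc_decomp a]
    rw [map_sum, ContinuousLinearMap.sum_apply, WithLp.ofLp_sum, Finset.sum_apply]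
    refine Finset.sum_congr rfl fun i _ => ?_
    rw [map_smulₛₗ]
    simp only [RingHom.id_apply]
    rw [ContinuousLinearMap.smul_apply, PiLp.smul_apply, smul_eq_mul]
  rw [h1]
  refine Finset.sum_congr rfl fun i _ => ?_
  rw [h2 i, Finset.mul_sum]
  exact Finset.sum_congr rfl fun j _ => by ring

lemma aux_le_one {a b : ℝ} (hab : a ^ 2 + b ^ 2 = 1) (ha : 0 ≤ a) : a ≤ 1 := by
  nlinarith [sq_nonneg b]

/-- The purely numerical estimate for the good terms. -/
lemma aux_good_term {C η M ε δ Wn a b : ℝ} (hC : 0 < C) (hM : 0 < M) (hη : 0 < η)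
    (hε : 0 < ε)
    (hc1' : ε ^ 2 * (8 * M ^ 2) ≤ 1) (hc2' : ε ^ 2 * (8 * C * M ^ 2) ≤ η)
    (hc3' : ε ^ 2 * (4 * C) ≤ 1)
    (hδ : δ = min (η / 2) (M ^ 2)) (hab : a ^ 2 + b ^ 2 = 1) (ha : 0 ≤ a) (hb : 0 ≤ b)
    (hWn : 0 ≤ Wn) (hW2 : ε⁻¹ * b - M ≤ Wn) :
    C * b ^ 2 + δ ≤ 2 * Wn ^ 2 + η * (2 * a ^ 2) := by
  have hεsq : (0:ℝ) < ε ^ 2 := by positivity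
  by_cases hcase : b ≤ 2 * M * ε
  · -- small b
    have h1 : b ^ 2 ≤ (2 * M * ε) ^ 2 := pow_le_pow_left₀ hb hcase 2
    have h1' : b ^ 2 ≤ 4 * (M ^ 2 * ε ^ 2) := by nlinarith [h1]
    have h2 : 4 * (M ^ 2 * ε ^ 2) ≤ 1 / 2 := by linarith [hc1']
    have h3 : C * b ^ 2 ≤ η / 2 := by
      have h3a := mul_le_mul_of_nonneg_left h1' hC.le
      linarith [hc2']
    have h4 : (1:ℝ) / 2 ≤ a ^ 2 := by linarith [hab, h1', h2]
    have hδ1 : δ ≤ η / 2 := hδ ▸ min_le_left _ _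
    have h5 := mul_le_mul_of_nonneg_left h4 hη.le
    nlinarith [sq_nonneg Wn]
  · -- large b
    push_neg at hcase
    have h8 : 2 * M ≤ ε⁻¹ * b := by
      have h9 := mul_le_mul_of_nonneg_left hcase.le (inv_pos.mpr hε).le
      rw [show ε⁻¹ * (2 * M * ε) = ε⁻¹ * ε * (2 * M) by ring, inv_mul_cancel₀ hε.ne',
        one_mul] at h9
      exact h9
    have hW1 : ε⁻¹ * b / 2 ≤ Wn := by linarith
    have hεb : 0 ≤ ε⁻¹ * b / 2 := by positivity
    have hWsq : (ε⁻¹ * b / 2) ^ 2 ≤ Wn ^ 2 := pow_le_pow_left₀ hεb hW1 2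
    have hbl : 4 * (M ^ 2 * ε ^ 2) ≤ b ^ 2 := by
      have hbl' := pow_le_pow_left₀ (by positivity : (0:ℝ) ≤ 2 * M * ε) hcase.le 2
      nlinarith [hbl']
    have hδ2 : δ ≤ M ^ 2 := hδ ▸ min_le_right _ _
    have h2W : 2 * (ε⁻¹ * b / 2) ^ 2 = b ^ 2 / (2 * ε ^ 2) := by
      field_simp
    have hkey : C * b ^ 2 + M ^ 2 ≤ b ^ 2 / (2 * ε ^ 2) := by
      rw [le_div_iff₀ (by positivity : (0:ℝ) < 2 * ε ^ 2)]
      nlinarith [mul_le_mul_of_nonneg_right hc3' (sq_nonneg b), hbl]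
    nlinarith [hWsq, h2W, hkey, mul_nonneg hη.le (sq_nonneg a)]

end CompAux


set_option maxHeartbeats 2000000 in
open CompAux Matrix in
/-- **Comparison functions from harmonic maps.** For every `n, m ≥ 1`, `M > 0`, `η > 0`
there is `ε₁ > 0` depending only on `n, m, M, η` such that for every open `V ⊆ ℝⁿ`, every
harmonic `h : V → ℝᵐ` with `|h| ≤ M`, `|Dh| ≤ M`, `|D²h| ≤ M` on `V`, and every
`0 < ε ≤ ε₁`, the function `H(x,z) = |ε⁻¹ z − h(x)|² + η|x|²` is a comparison function for
the minimal surface system in `V × B_εᵐ`. -/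
theorem comparison_from_harmonic (n m : ℕ) (hn : 1 ≤ n) (hm : 1 ≤ m)
    (M : ℝ) (hM : 0 < M) (η : ℝ) (hη : 0 < η) :
    ∃ ε₁ > (0 : ℝ), ∀ V : Set (Euc n), IsOpen V →
      ∀ h : Euc n → Euc m, HarmonicOnE n m V h →
        (∀ x ∈ V, ‖h x‖ ≤ M) → (∀ x ∈ V, ‖fderivWithin ℝ h V x‖ ≤ M) →
        (∀ x ∈ V, ‖iteratedFDerivWithin ℝ 2 h V x‖ ≤ M) →
      ∀ ε : ℝ, 0 < ε → ε ≤ ε₁ →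
        IsComparison n m
          {X : Euc (n + m) | xPart n m X ∈ V ∧ zPart n m X ∈ ball 0 ε}
          (fun X => ‖ε⁻¹ • zPart n m X - h (xPart n m X)‖ ^ 2 +
            η * ‖xPart n m X‖ ^ 2) := by
  classical
  have hn' : (1:ℝ) ≤ (n:ℝ) := by exact_mod_cast hn
  have hm' : (1:ℝ) ≤ (m:ℝ) := by exact_mod_cast hm
  set C : ℝ := 2 * n * m * M * (1 + M) with hC
  have hCpos : 0 < C := by
    have : (0:ℝ) < (n:ℝ) := lt_of_lt_of_le one_pos hn'
    have : (0:ℝ) < (m:ℝ) := lt_of_lt_of_le one_pos hm'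
    positivity
  set ebound : ℝ := min (min (1/(8*M^2)) (η/(8*C*M^2))) (1/(4*C)) with hebound
  have hebpos : 0 < ebound := by
    refine lt_min (lt_min ?_ ?_) ?_ <;> positivity
  refine ⟨Real.sqrt ebound, Real.sqrt_pos.mpr hebpos, ?_⟩
  intro V hV h hh hb1 hb2 hb3 ε hε hε₁
  have hε2 : ε ^ 2 ≤ ebound := (Real.le_sqrt hε.le hebpos.le).mp hε₁
  have hc1 : ε ^ 2 ≤ 1/(8*M^2) := hε2.trans ((min_le_left _ _).trans (min_le_left _ _))
  have hc2 : ε ^ 2 ≤ η/(8*C*M^2) := hε2.trans ((min_le_left _ _).trans (min_le_right _ _))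
  have hc3 : ε ^ 2 ≤ 1/(4*C) := hε2.trans (min_le_right _ _)
  set U : Set (Euc (n+m)) := {X | xPart n m X ∈ V ∧ zPart n m X ∈ ball 0 ε} with hU
  have hUopen : IsOpen U := by
    have hq : U = (xpL n m) ⁻¹' V ∩ (zpL n m) ⁻¹' (ball 0 ε) := rfl
    rw [hq]
    exact ((xpL n m).continuous.isOpen_preimage V hV).inter
      ((zpL n m).continuous.isOpen_preimage _ isOpen_ball)
  set w : Euc (n+m) → Euc m := fun X => ε⁻¹ • zPart n m X - h (xPart n m X) with hwdef
  set H : Euc (n+m) → ℝ :=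
    fun X => ‖ε⁻¹ • zPart n m X - h (xPart n m X)‖ ^ 2 + η * ‖xPart n m X‖ ^ 2 with hHdef
  -- `C²` regularity
  have hwC : ContDiffOn ℝ 2 w U := by
    refine ContDiffOn.sub ?_ (hh.1.comp (xpL n m).contDiff.contDiffOn fun X hX => hX.1)
    exact (((zpL n m).contDiff.const_smul ε⁻¹)).contDiffOn
  have hHC : ContDiffOn ℝ 2 H U := by
    refine ContDiffOn.add (hwC.norm_sq ℝ) (contDiffOn_const.mul ?_)
    exact ContDiffOn.norm_sq ℝ ((xpL n m).contDiff.contDiffOn)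
  refine ⟨hHC, ?_⟩
  intro X hX L hL hLperp e heL hone
  clear hL hLperp heL
  -- notation
  have hx : xPart n m X ∈ V := hX.1
  have hz : ‖zPart n m X‖ < ε := mem_ball_zero_iff.mp hX.2
  -- derivatives of h
  have hf1 : ∀ y ∈ V, HasFDerivAt h (fderiv ℝ h y) y := fun y hy =>
    ((hh.1.differentiableOn (by norm_num)).differentiableAt (hV.mem_nhds hy)).hasFDerivAt
  have hDhC : ContDiffOn ℝ 1 (fderiv ℝ h) V := hh.1.fderiv_of_isOpen hV (by norm_num)
  have hf2 : ∀ y ∈ V, HasFDerivAt (fderiv ℝ h) (fderiv ℝ (fderiv ℝ h) y) y := fun y hy =>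
    ((hDhC.differentiableOn one_ne_zero).differentiableAt (hV.mem_nhds hy)).hasFDerivAt
  set D2 : Euc n →L[ℝ] Euc n →L[ℝ] Euc m := fderiv ℝ (fderiv ℝ h) (xPart n m X) with hD2
  set W : Euc (n+m) → (Euc (n+m) →L[ℝ] Euc m) :=
    fun Y => ε⁻¹ • (zpL n m : Euc (n+m) →L[ℝ] Euc m)
      - (fderiv ℝ h (xPart n m Y)).comp (xpL n m) with hWdef
  have hwD : ∀ Y ∈ U, HasFDerivAt w (W Y) Y := by
    intro Y hY
    have h1 : HasFDerivAt (fun Y => h (xPart n m Y))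
        ((fderiv ℝ h (xPart n m Y)).comp (xpL n m)) Y :=
      (hf1 _ hY.1).comp Y (xpL n m).hasFDerivAt
    exact ((zpL n m).hasFDerivAt.const_smul ε⁻¹).sub h1
  set G : Euc (n+m) → (Euc (n+m) →L[ℝ] ℝ) :=
    fun Y => 2 • (ContinuousLinearMap.comp (innerSL ℝ (w Y)) (W Y))
      + η • (2 • (ContinuousLinearMap.comp (innerSL ℝ (xPart n m Y)) (xpL n m))) with hGdef
  have hHd : ∀ Y ∈ U, HasFDerivAt H (G Y) Y := by
    intro Y hY
    have h1 : HasFDerivAt (fun Y => ‖w Y‖ ^ 2)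
        (2 • (innerSL ℝ (w Y)).comp (W Y)) Y := (hwD Y hY).norm_sq
    have h2 : HasFDerivAt (fun Y => ‖xPart n m Y‖ ^ 2)
        (2 • (innerSL ℝ (xPart n m Y)).comp (xpL n m)) Y := (xpL n m).hasFDerivAt.norm_sq
    exact h1.add (h2.const_mul η)
  have hfd : ∀ Y ∈ U, fderiv ℝ H Y = G Y := fun Y hY => (hHd Y hY).fderiv
  -- second-derivative formula
  have hform : ∀ v : Euc (n+m), iteratedFDerivWithin ℝ 2 H U X ![v, v] =
      2 * ‖W X v‖ ^ 2 + η * (2 * ‖xPart n m v‖ ^ 2)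
        - 2 * (inner ℝ (w X) (D2 (xPart n m v) (xPart n m v)) : ℝ) := by
    intro v
    have e1 : iteratedFDerivWithin ℝ 2 H U X ![v, v] = fderiv ℝ (fderiv ℝ H) X v v := by
      rw [iteratedFDerivWithin_of_isOpen 2 hUopen hX, iteratedFDeriv_two_apply]
      simp
    have hCA : ContDiffAt ℝ 2 H X := hHC.contDiffAt (hUopen.mem_nhds hX)
    have hdF : DifferentiableAt ℝ (fderiv ℝ H) X :=
      (hCA.fderiv_right (m := 1) (by norm_num)).differentiableAt one_ne_zero
    have e3 : fderiv ℝ (fun Y => fderiv ℝ H Y v) X = (fderiv ℝ (fderiv ℝ H) X).flip v := by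
      have hq := fderiv_clm_apply (c := fderiv ℝ H) (u := fun _ => v) hdF
        (differentiableAt_const v)
      simpa using hq
    have hev : (fun Y => fderiv ℝ H Y v) =ᶠ[nhds X] (fun Y => G Y v) := by
      filter_upwards [hUopen.mem_nhds hX] with Y hY
      rw [hfd Y hY]
    -- explicit derivative of `Y ↦ G Y v`
    have hc : HasFDerivAt (fun Y => fderiv ℝ h (xPart n m Y)) (D2.comp (xpL n m)) X :=
      (hf2 _ hx).comp X (xpL n m).hasFDerivAt
    have happ := hc.clm_apply (hasFDerivAt_const (xpL n m v) X)
    have hWv : HasFDerivAt (fun Y => W Y v)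
        ((0 : Euc (n+m) →L[ℝ] Euc m) -
          ((fderiv ℝ h (xPart n m X)).comp (0 : Euc (n+m) →L[ℝ] Euc n)
            + (D2.comp (xpL n m)).flip (xpL n m v))) X := by
      have h0 : (fun Y => W Y v)
          = fun Y => ε⁻¹ • zpL n m v - fderiv ℝ h (xPart n m Y) (xpL n m v) := by
        funext Y
        simp [hWdef]
      rw [h0]
      exact (hasFDerivAt_const _ _).sub happ
    have hip1 := HasFDerivAt.inner ℝ (hwD X hX) hWv
    have hip2 := HasFDerivAt.inner ℝ (xpL n m).hasFDerivAt (hasFDerivAt_const (xpL n m v) X)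
    have hGfun : (fun Y => G Y v) = fun Y =>
        2 * (inner ℝ (w Y) (W Y v) : ℝ) + η * (2 * (inner ℝ (xpL n m Y) (xpL n m v) : ℝ)) := by
      funext Y
      simp [hGdef, ContinuousLinearMap.add_apply, ContinuousLinearMap.smul_apply,
        ContinuousLinearMap.comp_apply, innerSL_apply_apply, smul_eq_mul, two_smul]
      ring
    have hGd := (hip1.const_mul (2:ℝ)).add ((hip2.const_mul (2:ℝ)).const_mul η)
    have e4 : fderiv ℝ (fun Y => fderiv ℝ H Y v) X = fderiv ℝ (fun Y => G Y v) X :=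
      hev.fderiv_eq
    rw [e1, show fderiv ℝ (fderiv ℝ H) X v v = ((fderiv ℝ (fderiv ℝ H) X).flip v) v from rfl,
      ← e3, e4, hGfun, (show HasFDerivAt (fun Y => 2 * (inner ℝ (w Y) (W Y v) : ℝ) +
        η * (2 * (inner ℝ (xpL n m Y) (xpL n m v) : ℝ))) _ X from hGd).fderiv]
    simp only [ContinuousLinearMap.add_apply, ContinuousLinearMap.smul_apply,
      ContinuousLinearMap.comp_apply, ContinuousLinearMap.prod_apply,
      ContinuousLinearMap.sub_apply, ContinuousLinearMap.zero_apply,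
      ContinuousLinearMap.flip_apply, fderivInnerCLM_apply, smul_eq_mul,
      ContinuousLinearMap.neg_apply, map_zero, xpL_apply, zpL_apply,
      inner_zero_right, inner_neg_right, zero_sub, neg_neg, add_zero, zero_add]
    rw [real_inner_self_eq_norm_sq, real_inner_self_eq_norm_sq]
    ring
  -- ### The estimate
  -- convert the smallness conditions to multiplication form
  have hc1' : ε ^ 2 * (8 * M ^ 2) ≤ 1 := by
    have hq := mul_le_mul_of_nonneg_right hc1 (by positivity : (0:ℝ) ≤ 8 * M ^ 2)
    rwa [one_div, inv_mul_cancel₀ (by positivity : (0:ℝ) < 8 * M ^ 2).ne'] at hq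
  have hc2' : ε ^ 2 * (8 * C * M ^ 2) ≤ η := by
    have hq := mul_le_mul_of_nonneg_right hc2 (by positivity : (0:ℝ) ≤ 8 * C * M ^ 2)
    rwa [div_mul_cancel₀ η (by positivity : (0:ℝ) < 8 * C * M ^ 2).ne'] at hq
  have hc3' : ε ^ 2 * (4 * C) ≤ 1 := by
    have hq := mul_le_mul_of_nonneg_right hc3 (by positivity : (0:ℝ) ≤ 4 * C)
    rwa [one_div, inv_mul_cancel₀ (by positivity : (0:ℝ) < 4 * C).ne'] at hq
  -- orthonormality data
  have honXZ : ∀ k l, (inner ℝ (xPart n m (e k)) (xPart n m (e l)) : ℝ)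
      + (inner ℝ (zPart n m (e k)) (zPart n m (e l)) : ℝ) = if k = l then 1 else 0 := by
    intro k l
    rw [← inner_split n m (e k) (e l)]
    exact orthonormal_iff_ite.mp hone k l
  have hnorm1 : ∀ k, ‖xPart n m (e k)‖ ^ 2 + ‖zPart n m (e k)‖ ^ 2 = 1 := by
    intro k
    have hkk := honXZ k k
    rw [if_pos rfl, real_inner_self_eq_norm_sq, real_inner_self_eq_norm_sq] at hkk
    exact hkk
  -- the Gram condition
  set Amat : Matrix (Fin n) (Fin n) ℝ := fun k i => xPart n m (e k) i with hAmat
  set Bmat : Matrix (Fin n) (Fin m) ℝ := fun k α => zPart n m (e k) α with hBmat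
  have hGram : ((1 : Matrix (Fin n) (Fin n) ℝ) - Amat * Amatᵀ).PosSemidef := by
    have hEq : (1 : Matrix (Fin n) (Fin n) ℝ) - Amat * Amatᵀ = Bmat * Bmatᴴ := by
      ext k l
      have h1 : (Bmat * Bmatᴴ) k l = (inner ℝ (zPart n m (e k)) (zPart n m (e l)) : ℝ) := by
        simp only [Matrix.mul_apply, Matrix.conjTranspose_apply]
        simp [Matrix.mul_apply, Matrix.conjTranspose_apply, PiLp.inner_apply,
          RCLike.inner_apply, hBmat, mul_comm]
      have h2 : (Amat * Amatᵀ) k l = (inner ℝ (xPart n m (e k)) (xPart n m (e l)) : ℝ) := by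
        simp only [Matrix.mul_apply, Matrix.transpose_apply]
        simp [Matrix.mul_apply, Matrix.transpose_apply, PiLp.inner_apply,
          RCLike.inner_apply, hAmat, mul_comm]
      rw [Matrix.sub_apply, h1, h2, Matrix.one_apply, ← honXZ k l]
      ring
    rw [hEq]
    exact Matrix.posSemidef_self_mul_conjTranspose Bmat
  -- the Hessian matrices of h
  set S : Fin m → Matrix (Fin n) (Fin n) ℝ := fun α i j =>
    D2 (EuclideanSpace.single i (1:ℝ)) (EuclideanSpace.single j (1:ℝ)) α with hSdef
  have hglobal2 : iteratedFDerivWithin ℝ 2 h V (xPart n m X) = iteratedFDeriv ℝ 2 h (xPart n m X) :=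
    iteratedFDerivWithin_of_isOpen 2 hV hx
  have hS2 : ∀ (α : Fin m) (i j : Fin n), S α i j =
      (iteratedFDeriv ℝ 2 h (xPart n m X)
        ![EuclideanSpace.single i (1:ℝ), EuclideanSpace.single j (1:ℝ)]) α := by
    intro α i j
    rw [iteratedFDeriv_two_apply]
    simp [hSdef, hD2]
  have htr : ∀ α, ∑ i, S α i i = 0 := by
    intro α
    have hh2 := hh.2 (xPart n m X) hx α
    rw [← hh2]
    refine Finset.sum_congr rfl fun i _ => ?_
    rw [hS2 α i i, hglobal2]
  have hSb : ∀ (α : Fin m) (i j : Fin n), |S α i j| ≤ M := by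
    intro α i j
    rw [hS2 α i j]
    have h1 := euc_abs_le_norm (iteratedFDeriv ℝ 2 h (xPart n m X)
      ![EuclideanSpace.single i (1:ℝ), EuclideanSpace.single j (1:ℝ)]) α
    have h2 := (iteratedFDeriv ℝ 2 h (xPart n m X)).le_opNorm
      ![EuclideanSpace.single i (1:ℝ), EuclideanSpace.single j (1:ℝ)]
    have h3 : (∏ l : Fin 2, ‖(![EuclideanSpace.single i (1:ℝ),
        EuclideanSpace.single j (1:ℝ)] : Fin 2 → Euc n) l‖) = 1 := by
      rw [Fin.prod_univ_two]
      simp [EuclideanSpace.norm_single]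
    rw [h3, mul_one] at h2
    have h4 : ‖iteratedFDeriv ℝ 2 h (xPart n m X)‖ ≤ M := by
      rw [← hglobal2]; exact hb3 _ hx
    exact h1.trans (h2.trans h4)
  -- trace estimate per component
  have htrest : ∀ α, |∑ k, ∑ i, ∑ j, Amat k i * S α i j * Amat k j|
      ≤ (n:ℝ) * M * ∑ k, ‖zPart n m (e k)‖ ^ 2 := by
    intro α
    have hmain := aux_trace_est Amat (S α) M hM.le hGram (htr α) (hSb α)
    rw [Fintype.card_fin] at hmain
    refine hmain.trans_eq ?_
    congr 1
    refine Finset.sum_congr rfl fun k _ => ?_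
    have h5 : ∑ i, Amat k i ^ 2 = ‖xPart n m (e k)‖ ^ 2 := by
      rw [euc_norm_sq_eq_sum]
    have h6 := hnorm1 k
    rw [h5]; linarith
  -- the bad term
  have hwXb : ‖w X‖ ≤ 1 + M := by
    have h1 : ‖w X‖ ≤ ‖ε⁻¹ • zPart n m X‖ + ‖h (xPart n m X)‖ := norm_sub_le _ _
    have h2 : ‖ε⁻¹ • zPart n m X‖ = ε⁻¹ * ‖zPart n m X‖ := by
      rw [norm_smul, Real.norm_eq_abs, abs_of_pos (inv_pos.mpr hε)]
    have h3 : ε⁻¹ * ‖zPart n m X‖ ≤ 1 := by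
      have := mul_le_mul_of_nonneg_left hz.le (inv_pos.mpr hε).le
      rwa [inv_mul_cancel₀ hε.ne'] at this
    have h4 := hb1 _ hx
    rw [h2] at h1
    linarith
  have hBad : |∑ k, (inner ℝ (w X) (D2 (xPart n m (e k)) (xPart n m (e k))) : ℝ)|
      ≤ (m:ℝ) * (1 + M) * ((n:ℝ) * M * ∑ k, ‖zPart n m (e k)‖ ^ 2) := by
    have hswap : ∑ k, (inner ℝ (w X) (D2 (xPart n m (e k)) (xPart n m (e k))) : ℝ)
        = ∑ α, (w X α) * (∑ k, ∑ i, ∑ j, Amat k i * S α i j * Amat k j) := by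
      have hterm : ∀ k, (inner ℝ (w X) (D2 (xPart n m (e k)) (xPart n m (e k))) : ℝ)
          = ∑ α, (w X α) * (∑ i, ∑ j, Amat k i * S α i j * Amat k j) := by
        intro k
        rw [PiLp.inner_apply]
        refine Finset.sum_congr rfl fun α _ => ?_
        rw [RCLike.inner_apply, starRingEnd_apply, star_trivial]
        rw [mul_comm]
        congr 1
        rw [clm2_expand D2 (xPart n m (e k)) (xPart n m (e k)) α]
        refine Finset.sum_congr rfl fun i _ => Finset.sum_congr rfl fun j _ => by
          simp only [hAmat, hSdef]; ring
      rw [Finset.sum_congr rfl fun k _ => hterm k, Finset.sum_comm]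
      exact Finset.sum_congr rfl fun α _ => (Finset.mul_sum _ _ _).symm
    rw [hswap]
    have hsnn : (0:ℝ) ≤ ∑ k, ‖zPart n m (e k)‖ ^ 2 :=
      Finset.sum_nonneg fun k _ => sq_nonneg _
    calc |∑ α, (w X α) * (∑ k, ∑ i, ∑ j, Amat k i * S α i j * Amat k j)|
        ≤ ∑ α, |(w X α) * (∑ k, ∑ i, ∑ j, Amat k i * S α i j * Amat k j)| :=
          Finset.abs_sum_le_sum_abs _ _
      _ ≤ ∑ α : Fin m, (1 + M) * ((n:ℝ) * M * ∑ k, ‖zPart n m (e k)‖ ^ 2) := by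
          refine Finset.sum_le_sum fun α _ => ?_
          rw [abs_mul]
          have hα : |w X α| ≤ 1 + M := (euc_abs_le_norm (w X) α).trans hwXb
          exact mul_le_mul hα (htrest α) (abs_nonneg _) (by linarith [hM.le])
      _ = (m:ℝ) * (1 + M) * ((n:ℝ) * M * ∑ k, ‖zPart n m (e k)‖ ^ 2) := by
          rw [Finset.sum_const, Finset.card_univ, Fintype.card_fin, nsmul_eq_mul]
          ring
  -- the good terms
  set δ : ℝ := min (η/2) (M^2) with hδdef
  have hδpos : 0 < δ := lt_min (by positivity) (by positivity)
  have hgood : ∀ k, C * ‖zPart n m (e k)‖ ^ 2 + δ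
      ≤ 2 * ‖W X (e k)‖ ^ 2 + η * (2 * ‖xPart n m (e k)‖ ^ 2) := by
    intro k
    have hab := hnorm1 k
    have hak : ‖xPart n m (e k)‖ ≤ 1 := aux_le_one hab (norm_nonneg _)
    have hval : W X (e k)
        = ε⁻¹ • zPart n m (e k) - (fderiv ℝ h (xPart n m X)) (xPart n m (e k)) := by
      simp only [hWdef, ContinuousLinearMap.sub_apply, ContinuousLinearMap.smul_apply,
        ContinuousLinearMap.comp_apply, zpL_apply, xpL_apply]
    have hDa : ‖(fderiv ℝ h (xPart n m X)) (xPart n m (e k))‖ ≤ M := by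
      have hDh : ‖fderiv ℝ h (xPart n m X)‖ ≤ M := by
        rw [← fderivWithin_of_isOpen hV hx]; exact hb2 _ hx
      calc ‖(fderiv ℝ h (xPart n m X)) (xPart n m (e k))‖
          ≤ ‖fderiv ℝ h (xPart n m X)‖ * ‖xPart n m (e k)‖ :=
            (fderiv ℝ h (xPart n m X)).le_opNorm _
        _ ≤ M * 1 := mul_le_mul hDh hak (norm_nonneg _) hM.le
        _ = M := mul_one M
    have h6 : ‖ε⁻¹ • zPart n m (e k)‖ = ε⁻¹ * ‖zPart n m (e k)‖ := by
      rw [norm_smul, Real.norm_eq_abs, abs_of_pos (inv_pos.mpr hε)]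
    have h7 := norm_sub_norm_le (ε⁻¹ • zPart n m (e k))
      ((fderiv ℝ h (xPart n m X)) (xPart n m (e k)))
    have hW2 : ε⁻¹ * ‖zPart n m (e k)‖ - M ≤ ‖W X (e k)‖ := by
      rw [hval]
      rw [h6] at h7
      linarith
    exact aux_good_term hCpos hM hη hε hc1' hc2' hc3' hδdef hab (norm_nonneg _)
      (norm_nonneg _) (norm_nonneg _) hW2
  -- put everything together
  have hsum : ∑ k, iteratedFDerivWithin ℝ 2 H U X ![e k, e k]
      = (∑ k, (2 * ‖W X (e k)‖ ^ 2 + η * (2 * ‖xPart n m (e k)‖ ^ 2)))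
        - 2 * ∑ k, (inner ℝ (w X) (D2 (xPart n m (e k)) (xPart n m (e k))) : ℝ) := by
    rw [Finset.mul_sum, ← Finset.sum_sub_distrib]
    exact Finset.sum_congr rfl fun k _ => hform (e k)
  have hGsum : C * (∑ k, ‖zPart n m (e k)‖ ^ 2) + (n:ℝ) * δ
      ≤ ∑ k, (2 * ‖W X (e k)‖ ^ 2 + η * (2 * ‖xPart n m (e k)‖ ^ 2)) := by
    calc C * (∑ k, ‖zPart n m (e k)‖ ^ 2) + (n:ℝ) * δ
        = ∑ k, (C * ‖zPart n m (e k)‖ ^ 2 + δ) := by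
          rw [Finset.sum_add_distrib, ← Finset.mul_sum, Finset.sum_const, Finset.card_univ,
            Fintype.card_fin, nsmul_eq_mul]
      _ ≤ _ := Finset.sum_le_sum fun k _ => hgood k
  have h2Bad : 2 * |∑ k, (inner ℝ (w X) (D2 (xPart n m (e k)) (xPart n m (e k))) : ℝ)|
      ≤ C * ∑ k, ‖zPart n m (e k)‖ ^ 2 := by
    have heq : C * ∑ k, ‖zPart n m (e k)‖ ^ 2
        = 2 * ((m:ℝ) * (1 + M) * ((n:ℝ) * M * ∑ k, ‖zPart n m (e k)‖ ^ 2)) := by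
      rw [hC]; ring
    rw [heq]
    linarith [hBad]
  have habs := le_abs_self (∑ k, (inner ℝ (w X) (D2 (xPart n m (e k)) (xPart n m (e k))) : ℝ))
  have hnδ : (0:ℝ) < (n:ℝ) * δ := by positivity
  rw [hsum]
  linarith [hGsum, h2Bad, habs, hnδ]
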